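/- Fix a column C' of length c' with entries in [n] and a set S of size c ∈ {c', c'+1} as in the generation algorithm. Every left column C such that CC' is a two-column HHL filling is obtained from the root column Ĉ by a unique sequence of transpositions σ ∈ A(β): that is, the map A(β) → {HHL left columns for C'}, σ ↦ σ.Ĉ (restricted to those σ for which each successive transposition is legal) is a bijection onto the set of all arrangements C of S with CC' HHL. -/
import Mathlib

/-- Two-column HHL filling condition. -/
def HHL2 (c c' : ℕ) (C : Fin c → ℕ) (C' : Fin c' → ℕ) : Prop :=
  Function.Injective C ∧ Function.Injective C' ∧
  (∀ (i : Fin c) (k : Fin c'), (k : ℕ) < (i : ℕ) → C i ≠ C' k) ∧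
  (∀ (i : Fin c) (h : (i : ℕ) < c'), C i ≤ C' ⟨i, h⟩)

/-- Row `i` is a pivot row of the two-column configuration `CC'`:
either the left entry is strictly smaller than the right entry, or the row
lies below the bottom of the right column. -/
def PivotRow (c c' : ℕ) (C : Fin c → ℕ) (C' : Fin c' → ℕ) (i : Fin c) : Prop :=
  c' ≤ (i : ℕ) ∨ ∃ h : (i : ℕ) < c', C i < C' ⟨i, h⟩

/-- The set of pivot entries of the left column. -/
def pivotEntries (c c' : ℕ) (C : Fin c → ℕ) (C' : Fin c' → ℕ) : Set ℕ :=
  {x | ∃ i : Fin c, PivotRow c c' C C' i ∧ C i = x}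

/-- Failure of the Non-overlapping Condition: two distinct pivot rows whose
pivot intervals `[b_j, d_j]` (with `d_j = ∞` when the right entry is absent)
intersect. -/
def Overlap (c c' : ℕ) (C : Fin c → ℕ) (C' : Fin c' → ℕ) : Prop :=
  ∃ i j : Fin c, i ≠ j ∧ PivotRow c c' C C' i ∧ PivotRow c c' C C' j ∧
    ∃ z : ℕ, C i ≤ z ∧ (∀ h : (i : ℕ) < c', z ≤ C' ⟨i, h⟩) ∧
      C j ≤ z ∧ (∀ h : (j : ℕ) < c', z ≤ C' ⟨j, h⟩)

/-- Swap the two values `x` and `y` in the column `f` (transposition of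
entries). -/
def vswap (c : ℕ) (x y : ℕ) (f : Fin c → ℕ) : Fin c → ℕ :=
  fun i => if f i = x then y else if f i = y then x else f i

/-- Apply the first `l` steps of a choice sequence `ch` to the column `C0`:
at step `l` (where `a l` is the `l`-th largest entry of the column), if
`ch l = some b` then the transposition `(b < a l)` is applied. This realizes
an element of `A(β)`, which uses at most one transposition from each row of
`β`. -/
def applySeq (c : ℕ) (ch : ℕ → Option ℕ) (a : ℕ → ℕ) (C0 : Fin c → ℕ) :
    ℕ → Fin c → ℕ
  | 0 => C0
  | l + 1 =>
    match ch l with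
    | none => applySeq c ch a C0 l
    | some b => vswap c (a l) b (applySeq c ch a C0 l)

lemma vswap_eq_swap_comp (c x y : ℕ) (f : Fin c → ℕ) :
    vswap c x y f = (Equiv.swap x y) ∘ f := by
  funext i
  simp [vswap, Equiv.swap_apply_def, Function.comp]

lemma vswap_injective (c x y : ℕ) (f : Fin c → ℕ) (hf : Function.Injective f) :
    Function.Injective (vswap c x y f) := by
  rw [vswap_eq_swap_comp]; exact (Equiv.injective _).comp hf

lemma vswap_range (c x y : ℕ) (f : Fin c → ℕ) (hx : x ∈ Set.range f)
    (hy : y ∈ Set.range f) : Set.range (vswap c x y f) = Set.range f := by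
  ext z
  constructor
  · rintro ⟨i, rfl⟩
    by_cases h1 : f i = x
    · simpa [vswap, h1] using hy
    · by_cases h2 : f i = y
      · obtain ⟨j, hj⟩ := hx
        exact ⟨j, by by_cases hxy : y = x <;> simp [vswap, h1, h2, hj, hxy]⟩
      · simp only [vswap, h1, h2, if_false]; exact ⟨i, rfl⟩
  · rintro ⟨i, rfl⟩
    by_cases h1 : f i = x
    · obtain ⟨j, hj⟩ := hy
      refine ⟨j, ?_⟩
      by_cases hxy : x = y
      · simp [vswap, hj, hxy, h1]
      · simp [vswap, hj, hxy, h1, Ne.symm hxy]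
    · by_cases h2 : f i = y
      · obtain ⟨j, hj⟩ := hx
        refine ⟨j, ?_⟩
        simp [vswap, hj, h2]
      · exact ⟨i, by simp [vswap, h1, h2]⟩

/-- The intermediate columns of the generation algorithm: at step `l`, if the
`l`-th largest entry `a l` is not yet at its final position `p l`, swap it with
the value currently there. -/
def Dfun (c : ℕ) (a : ℕ → ℕ) (p : ℕ → Fin c) (C0 : Fin c → ℕ) : ℕ → Fin c → ℕ
  | 0 => C0
  | l + 1 =>
    if l < c ∧ Dfun c a p C0 l (p l) ≠ a l then
      vswap c (a l) (Dfun c a p C0 l (p l)) (Dfun c a p C0 l)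
    else Dfun c a p C0 l

/-- The choice sequence realized by the greedy algorithm. -/
def chfun (c : ℕ) (a : ℕ → ℕ) (p : ℕ → Fin c) (C0 : Fin c → ℕ) (l : ℕ) : Option ℕ :=
  if l < c ∧ Dfun c a p C0 l (p l) ≠ a l then some (Dfun c a p C0 l (p l)) else none

lemma Dfun_succ (c : ℕ) (a : ℕ → ℕ) (p : ℕ → Fin c) (C0 : Fin c → ℕ) (l : ℕ) :
    Dfun c a p C0 (l + 1) =
      if l < c ∧ Dfun c a p C0 l (p l) ≠ a l then
        vswap c (a l) (Dfun c a p C0 l (p l)) (Dfun c a p C0 l)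
      else Dfun c a p C0 l := rfl

lemma applySeq_succ (c : ℕ) (ch : ℕ → Option ℕ) (a : ℕ → ℕ) (C0 : Fin c → ℕ) (l : ℕ) :
    applySeq c ch a C0 (l + 1) =
      match ch l with
      | none => applySeq c ch a C0 l
      | some b => vswap c (a l) b (applySeq c ch a C0 l) := rfl

lemma applySeq_chfun (c : ℕ) (a : ℕ → ℕ) (p : ℕ → Fin c) (C0 : Fin c → ℕ) (l : ℕ) :
    applySeq c (chfun c a p C0) a C0 l = Dfun c a p C0 l := by
  induction l with
  | zero => rfl
  | succ l ih =>
    rw [applySeq_succ, Dfun_succ]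
    by_cases h : l < c ∧ Dfun c a p C0 l (p l) ≠ a l
    · rw [chfun, if_pos h, if_pos h, ih]
    · rw [chfun, if_neg h, if_neg h, ih]

lemma applySeq_succ_none (c : ℕ) (ch : ℕ → Option ℕ) (a : ℕ → ℕ) (C0 : Fin c → ℕ)
    (l : ℕ) (h : ch l = none) :
    applySeq c ch a C0 (l + 1) = applySeq c ch a C0 l := by
  rw [applySeq_succ, h]

lemma applySeq_succ_some (c : ℕ) (ch : ℕ → Option ℕ) (a : ℕ → ℕ) (C0 : Fin c → ℕ)
    (l : ℕ) (b : ℕ) (h : ch l = some b) :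
    applySeq c ch a C0 (l + 1) = vswap c (a l) b (applySeq c ch a C0 l) := by
  rw [applySeq_succ, h]

lemma applySeq_congr (c : ℕ) (ch ch' : ℕ → Option ℕ) (a : ℕ → ℕ) (C0 : Fin c → ℕ)
    (l : ℕ) (h : ∀ m, m < l → ch m = ch' m) :
    applySeq c ch a C0 l = applySeq c ch' a C0 l := by
  induction l with
  | zero => rfl
  | succ l ih =>
    rw [applySeq_succ, applySeq_succ, h l (Nat.lt_succ_self l),
      ih (fun m hm => h m (Nat.lt_trans hm (Nat.lt_succ_self l)))]

/-- Proposition 4.2: the generation algorithm uniquely generates all two-column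
HHL configurations. Every left column `C` that is an arrangement of the root
column `Croot` with `CC'` HHL is obtained from `Croot` by a unique legal
sequence `σ ∈ A(β)` of transpositions, each switching a pivot entry `b` with a
strictly larger entry `a l`. -/
theorem generation_algorithm_unique (c c' : ℕ) (hcc : c = c' ∨ c = c' + 1)
    (C' : Fin c' → ℕ) (Croot : Fin c → ℕ)
    (hroot : HHL2 c c' Croot C')
    (hmatch : ∀ (i : Fin c) (j : Fin c'), Croot i = C' j → (i : ℕ) = (j : ℕ))
    (horder : ∀ (i i' : Fin c) (hi : (i : ℕ) < c') (hi' : (i' : ℕ) < c'),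
      (∀ j : Fin c', Croot i ≠ C' j) → (∀ j : Fin c', Croot i' ≠ C' j) →
      (Croot i < Croot i' ↔ C' ⟨(i : ℕ), hi⟩ < C' ⟨(i' : ℕ), hi'⟩))
    (hbottom : ∀ i : Fin c, (i : ℕ) = c' →
      ∀ i' : Fin c, (∀ j : Fin c', Croot i' ≠ C' j) → Croot i' ≤ Croot i)
    -- `a` enumerates the entries of the column in strictly decreasing order:
    (a : ℕ → ℕ)
    (ha : ∀ l l', l < l' → l' < c → a l' < a l)
    (haS : ∀ l < c, ∃ i : Fin c, Croot i = a l)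
    (C : Fin c → ℕ) (hCarr : Set.range C = Set.range Croot)
    (hC : HHL2 c c' C C') :
    ∃! ch : ℕ → Option ℕ,
      (∀ l, c ≤ l → ch l = none) ∧
      (∀ l b, ch l = some b → b ∈ pivotEntries c c' Croot C' ∧ b < a l) ∧
      (∀ l < c, HHL2 c c' (applySeq c ch a Croot (l + 1)) C') ∧
      applySeq c ch a Croot c = C := by
  classical
  obtain ⟨hCinj, hC'inj, hCatt, hCrow⟩ := hC
  obtain ⟨hRinj, -, hRatt, hRrow⟩ := hroot
  rcases Nat.eq_zero_or_pos c with hc0 | hc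
  · subst hc0
    refine ⟨fun _ => none, ⟨fun l _ => rfl, fun l b h => by simp at h,
      fun l hl => absurd hl (Nat.not_lt_zero l), funext fun i => i.elim0⟩, ?_⟩
    rintro ch' ⟨h1, -, -, -⟩
    funext l
    exact h1 l (Nat.zero_le l)
  -- main case : c > 0
  have haC : ∀ l, l < c → ∃ i : Fin c, C i = a l := by
    intro l hl
    obtain ⟨i, hi⟩ := haS l hl
    have : a l ∈ Set.range C := by rw [hCarr]; exact ⟨i, hi⟩
    exact this
  set p : ℕ → Fin c := fun l => if h : l < c then (haC l h).choose else ⟨0, hc⟩ with hpdef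
  have hpC : ∀ l, l < c → C (p l) = a l := by
    intro l h
    simp only [hpdef, dif_pos h]
    exact (haC l h).choose_spec
  have haInj : ∀ l m, l < c → m < c → a l = a m → l = m := by
    intro l m hl hm he
    rcases Nat.lt_trichotomy l m with h | h | h
    · exact absurd he (Nat.ne_of_gt (ha l m h hm))
    · exact h
    · exact absurd he.symm (Nat.ne_of_gt (ha m l h hl))
  have hpInj : ∀ l m, l < c → m < c → p l = p m → l = m := by
    intro l m hl hm he
    exact haInj l m hl hm (by rw [← hpC l hl, ← hpC m hm, he])
  have hav : ∀ v, v ∈ Set.range Croot → ∃ m, m < c ∧ a m = v := by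
    intro v hv
    by_contra hcon
    push_neg at hcon
    have hsub : (Finset.range c).image a ⊆ (Finset.univ.image Croot).erase v := by
      intro x hx
      simp only [Finset.mem_image, Finset.mem_range] at hx
      obtain ⟨m, hm, rfl⟩ := hx
      refine Finset.mem_erase.mpr ⟨hcon m hm, ?_⟩
      obtain ⟨i, hi⟩ := haS m hm
      exact Finset.mem_image.mpr ⟨i, Finset.mem_univ i, hi⟩
    have h1 : ((Finset.range c).image a).card = c := by
      rw [Finset.card_image_of_injOn, Finset.card_range]
      intro x hx y hy hxy
      simp only [Finset.coe_range, Set.mem_Iio] at hx hy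
      exact haInj x y hx hy hxy
    have h2 : v ∈ Finset.univ.image Croot := by
      obtain ⟨i, hi⟩ := hv
      exact Finset.mem_image.mpr ⟨i, Finset.mem_univ i, hi⟩
    have h3 : (Finset.univ.image Croot).card = c := by
      rw [Finset.card_image_of_injective _ hRinj, Finset.card_univ, Fintype.card_fin]
    have h4 := Finset.card_le_card hsub
    rw [h1, Finset.card_erase_of_mem h2, h3] at h4
    omega
  set D := Dfun c a p Croot with hDdef
  have hD0 : D 0 = Croot := rfl
  have hDsucc : ∀ l, D (l + 1) =
      if l < c ∧ D l (p l) ≠ a l then vswap c (a l) (D l (p l)) (D l) else D l :=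
    fun l => Dfun_succ c a p Croot l
  have inv : ∀ l, l ≤ c →
      Function.Injective (D l) ∧
      Set.range (D l) = Set.range Croot ∧
      (∀ (i : Fin c) (h : (i : ℕ) < c'), D l i ≤ C' ⟨i, h⟩) ∧
      (∀ (i : Fin c) (k : Fin c'), (k : ℕ) < (i : ℕ) → D l i ≠ C' k) ∧
      (∀ j, j < l → D l (p j) = a j) ∧
      (∀ (i : Fin c) (h : (i : ℕ) < c'), Croot i = C' ⟨i, h⟩ →
        (∀ m, m < l → a m ≠ Croot i) → D l i = Croot i) ∧
      (∀ m, m < l → D m (p m) ≠ a m →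
        D m (p m) ∈ pivotEntries c c' Croot C' ∧ D m (p m) < a m) := by
    intro l
    induction l with
    | zero =>
      intro _
      rw [hD0]
      exact ⟨hRinj, rfl, hRrow, hRatt, fun j hj => absurd hj (Nat.not_lt_zero j),
        fun i h _ _ => rfl, fun m hm => absurd hm (Nat.not_lt_zero m)⟩
    | succ l ih =>
      intro hl1
      have hl : l < c := hl1
      obtain ⟨Dinj, Drange, Drow, Datt, Dplaced, Dstay, Dpiv⟩ := ih (Nat.le_of_lt hl)
      by_cases hb : D l (p l) = a l
      · -- no swap at this step
        have hD1 : D (l + 1) = D l := by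
          rw [hDsucc l, if_neg (fun hcon => hcon.2 hb)]
        rw [hD1]
        refine ⟨Dinj, Drange, Drow, Datt, ?_, ?_, ?_⟩
        · intro j hj
          rcases Nat.lt_succ_iff_lt_or_eq.mp hj with h | h
          · exact Dplaced j h
          · subst h; exact hb
        · intro i h hmm hnot
          exact Dstay i h hmm (fun m hm => hnot m (Nat.lt_trans hm (Nat.lt_succ_self l)))
        · intro m hm hne
          rcases Nat.lt_succ_iff_lt_or_eq.mp hm with h | h
          · exact Dpiv m h hne
          · subst h; exact absurd hb hne
      · -- swap step
        have hD1 : D (l + 1) = vswap c (a l) (D l (p l)) (D l) := by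
          rw [hDsucc l, if_pos ⟨hl, hb⟩]
        have hbR : D l (p l) ∈ Set.range Croot := by rw [← Drange]; exact ⟨p l, rfl⟩
        obtain ⟨m0, hm0c, hm0⟩ := hav (D l (p l)) hbR
        have hlm0 : l < m0 := by
          rcases Nat.lt_trichotomy m0 l with h | h | h
          · exfalso
            have h5 : D l (p m0) = D l (p l) := by rw [Dplaced m0 h, hm0]
            have h6 := hpInj m0 l hm0c hl (Dinj h5)
            omega
          · exact absurd (h ▸ hm0) (fun he => hb he.symm)
          · exact h
        have hblt : D l (p l) < a l := hm0 ▸ ha l m0 hlm0 hm0c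
        have hcore : ∀ k : Fin c', D l (p l) ≠ C' k := by
          intro k hk
          obtain ⟨i1, hi1⟩ := hbR
          have hik : (i1 : ℕ) = (k : ℕ) := hmatch i1 k (by rw [hi1, hk])
          have hi1c : (i1 : ℕ) < c' := by rw [hik]; exact k.2
          have hmm : Croot i1 = C' ⟨(i1 : ℕ), hi1c⟩ := by
            rw [hi1, hk]; congr 1; exact Fin.ext hik.symm
          have hst : D l i1 = Croot i1 := by
            apply Dstay i1 hi1c hmm
            intro m hm hma
            have hmm0 : m = m0 := haInj m m0 (Nat.lt_trans hm hl) hm0c (by rw [hma, hi1, ← hm0])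
            omega
          have hipl : i1 = p l := Dinj (by rw [hst, hi1])
          have hCpl : C i1 = a l := by rw [hipl]; exact hpC l hl
          have hle : C i1 ≤ C' ⟨(i1 : ℕ), hi1c⟩ := hCrow i1 hi1c
          rw [hCpl, ← hmm, hi1] at hle
          omega
        have hpiv : D l (p l) ∈ pivotEntries c c' Croot C' := by
          obtain ⟨i1, hi1⟩ := hbR
          refine ⟨i1, ?_, hi1⟩
          by_cases hcc' : c' ≤ (i1 : ℕ)
          · exact Or.inl hcc'
          · have h : (i1 : ℕ) < c' := Nat.not_le.mp hcc'
            exact Or.inr ⟨h, lt_of_le_of_ne (hRrow i1 h)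
              (by rw [hi1]; exact hcore ⟨(i1 : ℕ), h⟩)⟩
        have halR : a l ∈ Set.range (D l) := by
          rw [Drange]; exact haS l hl
        have hvs : ∀ i, vswap c (a l) (D l (p l)) (D l) i =
            if D l i = a l then D l (p l) else if D l i = D l (p l) then a l else D l i :=
          fun i => rfl
        rw [hD1]
        refine ⟨vswap_injective _ _ _ _ Dinj, ?_, ?_, ?_, ?_, ?_, ?_⟩
        · rw [vswap_range _ _ _ _ halR ⟨p l, rfl⟩]; exact Drange
        · -- rows
          intro i h
          rw [hvs i]
          by_cases h1 : D l i = a l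
          · rw [if_pos h1]
            exact le_trans (Nat.le_of_lt hblt) (h1 ▸ Drow i h)
          · rw [if_neg h1]
            by_cases h2 : D l i = D l (p l)
            · rw [if_pos h2]
              have hipl : i = p l := Dinj h2
              rw [← hpC l hl, ← hipl]
              exact hCrow i h
            · rw [if_neg h2]; exact Drow i h
        · -- non-attacking
          intro i k hk
          rw [hvs i]
          by_cases h1 : D l i = a l
          · rw [if_pos h1]; exact hcore k
          · rw [if_neg h1]
            by_cases h2 : D l i = D l (p l)
            · rw [if_pos h2]
              have hipl : i = p l := Dinj h2
              rw [← hpC l hl, ← hipl]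
              exact hCatt i k hk
            · rw [if_neg h2]; exact Datt i k hk
        · -- placed values
          intro j hj
          rw [hvs (p j)]
          rcases Nat.lt_succ_iff_lt_or_eq.mp hj with h | h
          · have hja : D l (p j) = a j := Dplaced j h
            have hne1 : D l (p j) ≠ a l := by
              rw [hja]; exact fun he => by have := haInj j l (Nat.lt_trans h hl) hl he; omega
            have hne2 : D l (p j) ≠ D l (p l) := by
              rw [hja, ← hm0]
              exact fun he => by
                have := haInj j m0 (Nat.lt_trans h hl) hm0c he; omega
            rw [if_neg hne1, if_neg hne2]
            exact hja
          · subst h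
            rw [if_neg hb, if_pos rfl]
        · -- matched entries stay
          intro i h hmm hnot
          have hst : D l i = Croot i :=
            Dstay i h hmm (fun m hm => hnot m (Nat.lt_trans hm (Nat.lt_succ_self l)))
          rw [hvs i]
          have h1 : D l i ≠ a l := by
            rw [hst]; exact fun he => hnot l (Nat.lt_succ_self l) he.symm
          have h2 : D l i ≠ D l (p l) := by
            intro he
            have hipl : i = p l := Dinj he
            have hCpl : C i = a l := by rw [hipl]; exact hpC l hl
            have hle : C i ≤ C' ⟨(i : ℕ), h⟩ := hCrow i h
            rw [hCpl, ← hmm, ← hst, he] at hle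
            omega
          rw [if_neg h1, if_neg h2]
          exact hst
        · -- pivot facts
          intro m hm hne
          rcases Nat.lt_succ_iff_lt_or_eq.mp hm with h | h
          · exact Dpiv m h hne
          · subst h; exact ⟨hpiv, hblt⟩
  obtain ⟨Dcinj, Dcrange, Dcrow, Dcatt, Dcplaced, -, Dcpiv⟩ := inv c le_rfl
  have hDc : D c = C := by
    have hsurjP : Function.Surjective (fun j : Fin c => p (j : ℕ)) :=
      Finite.surjective_of_injective (fun x y hxy => Fin.ext (hpInj x y x.2 y.2 hxy))
    funext i
    obtain ⟨j, hj0⟩ := hsurjP i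
    have hj : p (j : ℕ) = i := hj0
    have hjc : (j : ℕ) < c := j.2
    calc D c i = D c (p (j : ℕ)) := by rw [hj]
    _ = a (j : ℕ) := Dcplaced (j : ℕ) hjc
    _ = C (p (j : ℕ)) := (hpC (j : ℕ) hjc).symm
    _ = C i := by rw [hj]
  refine ⟨chfun c a p Croot, ⟨?_, ?_, ?_, ?_⟩, ?_⟩
  · intro l hlc
    rw [chfun, if_neg (fun hcon => absurd hcon.1 (Nat.not_lt.mpr hlc))]
  · intro l b0 hsome
    rw [chfun] at hsome
    split_ifs at hsome with hcond
    · obtain rfl : Dfun c a p Croot l (p l) = b0 := by injection hsome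
      exact Dcpiv l hcond.1 hcond.2
  · intro l hlc
    rw [applySeq_chfun, ← hDdef]
    obtain ⟨j1, j2, j3, j4, j5, j6, j7⟩ := inv (l + 1) (Nat.succ_le_of_lt hlc)
    exact ⟨j1, hC'inj, j4, j3⟩
  · rw [applySeq_chfun, ← hDdef]
    exact hDc
  · -- uniqueness
    rintro ch' ⟨h1, h2, -, h4⟩
    have key : ∀ l, ch' l = chfun c a p Croot l := by
      intro l
      induction l using Nat.strong_induction_on with
      | _ l IH =>
      by_cases hlc : l < c
      · have hAl : applySeq c ch' a Croot l = D l := by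
          rw [applySeq_congr c ch' (chfun c a p Croot) a Croot l IH, applySeq_chfun, ← hDdef]
        have hstab : ∀ t, l + 1 + t ≤ c → ∀ j : Fin c,
            applySeq c ch' a Croot (l + 1) j = a l →
            applySeq c ch' a Croot (l + 1 + t) j = a l := by
          intro t
          induction t with
          | zero => intro _ j hj; exact hj
          | succ t iht =>
            intro htc j hj
            have hm : l + 1 + t < c := by omega
            have hprev := iht (Nat.le_of_lt hm) j hj
            have hidx : l + 1 + (t + 1) = (l + 1 + t) + 1 := by omega
            rw [hidx]
            cases hch : ch' (l + 1 + t) with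
            | none => rw [applySeq_succ_none c ch' a Croot _ hch]; exact hprev
            | some b' =>
              have hblt' := (h2 (l + 1 + t) b' hch).2
              have hlt : a (l + 1 + t) < a l := ha l (l + 1 + t) (by omega) hm
              rw [applySeq_succ_some c ch' a Croot _ b' hch]
              show (if applySeq c ch' a Croot (l + 1 + t) j = a (l + 1 + t) then b'
                else if applySeq c ch' a Croot (l + 1 + t) j = b' then a (l + 1 + t)
                else applySeq c ch' a Croot (l + 1 + t) j) = a l
              rw [hprev, if_neg (by omega), if_neg (by omega)]
        have hdown : ∀ t, l + 1 + t ≤ c →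
            (∃ j, applySeq c ch' a Croot (l + 1 + t) j = a l) →
            ∃ j, applySeq c ch' a Croot (l + 1) j = a l := by
          intro t
          induction t with
          | zero => intro _ h; exact h
          | succ t iht =>
            rintro htc ⟨j, hj⟩
            apply iht (by omega)
            have hm : l + 1 + t < c := by omega
            have hidx : l + 1 + (t + 1) = (l + 1 + t) + 1 := by omega
            rw [hidx] at hj
            cases hch : ch' (l + 1 + t) with
            | none => rw [applySeq_succ_none c ch' a Croot _ hch] at hj; exact ⟨j, hj⟩
            | some b' =>
              rw [applySeq_succ_some c ch' a Croot _ b' hch] at hj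
              have hblt' := (h2 (l + 1 + t) b' hch).2
              have hlt : a (l + 1 + t) < a l := ha l (l + 1 + t) (by omega) hm
              have hvs : vswap c (a (l + 1 + t)) b' (applySeq c ch' a Croot (l + 1 + t)) j =
                  if applySeq c ch' a Croot (l + 1 + t) j = a (l + 1 + t) then b'
                  else if applySeq c ch' a Croot (l + 1 + t) j = b' then a (l + 1 + t)
                  else applySeq c ch' a Croot (l + 1 + t) j := rfl
              rw [hvs] at hj
              by_cases hc1 : applySeq c ch' a Croot (l + 1 + t) j = a (l + 1 + t)
              · rw [if_pos hc1] at hj; omega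
              · rw [if_neg hc1] at hj
                by_cases hc2 : applySeq c ch' a Croot (l + 1 + t) j = b'
                · rw [if_pos hc2] at hj; omega
                · rw [if_neg hc2] at hj; exact ⟨j, hj⟩
        have ht0 : l + 1 + (c - (l + 1)) = c := by omega
        obtain ⟨j, hj⟩ := hdown (c - (l + 1)) (by omega)
          ⟨p l, by rw [ht0, h4]; exact hpC l hlc⟩
        have hjc : C j = a l := by
          have hs := hstab (c - (l + 1)) (by omega) j hj
          rw [ht0, h4] at hs
          exact hs
        have hjp : j = p l := hCinj (by rw [hjc, hpC l hlc])
        rw [hjp] at hj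
        cases hch : ch' l with
        | none =>
          have hE : applySeq c ch' a Croot (l + 1) = D l := by
            rw [applySeq_succ_none c ch' a Croot l hch, hAl]
          rw [hE] at hj
          rw [chfun, if_neg (fun hcon => hcon.2 hj)]
        | some b' =>
          have hE : applySeq c ch' a Croot (l + 1) = vswap c (a l) b' (D l) := by
            rw [applySeq_succ_some c ch' a Croot l b' hch, hAl]
          rw [hE] at hj
          have hblt' := (h2 l b' hch).2
          have hvs : vswap c (a l) b' (D l) (p l) =
              if D l (p l) = a l then b' else if D l (p l) = b' then a l else D l (p l) := rfl
          rw [hvs] at hj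
          by_cases hc1 : D l (p l) = a l
          · rw [if_pos hc1] at hj; omega
          · rw [if_neg hc1] at hj
            by_cases hc2 : D l (p l) = b'
            · rw [chfun, if_pos ⟨hlc, hc1⟩]
              exact congrArg some hc2.symm
            · rw [if_neg hc2] at hj
              exact absurd hj hc1
      · rw [h1 l (Nat.not_lt.mp hlc), chfun, if_neg (fun hcon => hlc hcon.1)]
    exact funext key
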